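/- Every prismatic graph in the class F_8 admits a hitting set of its triangles of cardinality at most 3; indeed {v_1, v_2, v_3} is such a hitting set. -/

import Mathlib

/-- A graph is prismatic if for every triangle, every vertex not in the triangle
has exactly one neighbour in the triangle. -/
def Prismatic {V : Type*} (G : SimpleGraph V) : Prop :=
  ∀ a b c v : V, G.Adj a b → G.Adj a c → G.Adj b c →
    v ≠ a → v ≠ b → v ≠ c → ∃! u, u ∈ ({a, b, c} : Set V) ∧ G.Adj v u

/-- The rotator: the graph H of the class F₈ on nine vertices (0-based: vᵢ is i-1).
{0,1,2} is a triangle, {3,4,5} is complete to {6,7,8}, and i is adjacent to i+3 and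
i+6 for i = 0,1,2. -/
def RotatorF8 : SimpleGraph (Fin 9) where
  Adj u v := u ≠ v ∧
    ((u.val < 3 ∧ v.val < 3) ∨
     (3 ≤ u.val ∧ u.val < 6 ∧ 6 ≤ v.val) ∨ (3 ≤ v.val ∧ v.val < 6 ∧ 6 ≤ u.val) ∨
     (u.val < 3 ∧ (v.val = u.val + 3 ∨ v.val = u.val + 6)) ∨
     (v.val < 3 ∧ (u.val = v.val + 3 ∨ u.val = v.val + 6)))
  symm := ⟨by
    rintro u v ⟨h1, h2⟩
    exact ⟨h1.symm, by tauto⟩⟩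
  loopless := ⟨fun u h => h.1 rfl⟩

/-- p and q form one of the multiplied pairs {3,6}, {4,7}, {5,8}
(that is, {v₄,v₇}, {v₅,v₈}, {v₆,v₉} in the 1-based notation). -/
def F8SamePair (p q : Fin 9) : Prop :=
  3 ≤ p.val ∧ 3 ≤ q.val ∧ (q.val = p.val + 3 ∨ p.val = q.val + 3)

/-- Every prismatic graph in the class F₈ admits a hitting set of its triangles of
cardinality at most 3; indeed the copy of {v₁,v₂,v₃} = {0,1,2} is such a hitting set.
G is obtained from the rotator by successively multiplying {3,6}, {4,7} and {5,8};
it is encoded by the projection π : W → Fin 9 (fibres over 0,1,2 are singletons) and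
the integer maps collected into φ : new vertices over a multiplied pair are adjacent
iff their φ-values agree, and all other adjacencies are inherited from the rotator. -/
theorem class_F8_hitting_card_le_three {W : Type*}
    (G : SimpleGraph W) (π : W → Fin 9) (φ : W → ℤ)
    (hπ : ∀ v : Fin 9, v.val < 3 → ∃! w : W, π w = v)
    (hφ : ∀ w w' : W, π w = π w' → φ w = φ w' → w = w')
    (hadj : ∀ w w' : W, G.Adj w w' ↔ (π w ≠ π w' ∧
      ((F8SamePair (π w) (π w') ∧ φ w = φ w') ∨
       (¬ F8SamePair (π w) (π w') ∧ RotatorF8.Adj (π w) (π w')))))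
    (hG : Prismatic G) :
    ∃ S : Finset W, S.card ≤ 3 ∧
      (∀ w : W, w ∈ S ↔ (π w).val < 3) ∧
      ∀ p q r : W, G.Adj p q → G.Adj p r → G.Adj q r →
        (p ∈ S ∨ q ∈ S ∨ r ∈ S) := by
  classical
  obtain ⟨w0, h0, u0⟩ := hπ 0 (by norm_num)
  obtain ⟨w1, h1, u1⟩ := hπ 1 (by norm_num)
  obtain ⟨w2, h2, u2⟩ := hπ 2 (by norm_num)
  have hmem : ∀ w : W, w ∈ ({w0, w1, w2} : Finset W) ↔ (π w).val < 3 := by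
    intro w
    simp only [Finset.mem_insert, Finset.mem_singleton]
    constructor
    · rintro (rfl | rfl | rfl) <;> simp [h0, h1, h2]
    · intro hw
      have h3 : π w = 0 ∨ π w = 1 ∨ π w = 2 := by omega
      rcases h3 with h | h | h
      · exact Or.inl (u0 w h)
      · exact Or.inr (Or.inl (u1 w h))
      · exact Or.inr (Or.inr (u2 w h))
  refine ⟨{w0, w1, w2}, ?_, hmem, ?_⟩
  · exact (Finset.card_insert_le _ _).trans (Nat.succ_le_succ
      ((Finset.card_insert_le _ _).trans (Nat.succ_le_succ (by simp))))
  · intro p q r hpq hpr hqr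
    by_contra hcon
    push_neg at hcon
    obtain ⟨hp, hq, hr⟩ := hcon
    rw [hmem] at hp hq hr
    push_neg at hp hq hr
    have key : ∀ a b : W, G.Adj a b → 3 ≤ (π a).val → 3 ≤ (π b).val →
        ((π a).val < 6 ∧ 6 ≤ (π b).val) ∨ ((π b).val < 6 ∧ 6 ≤ (π a).val) := by
      intro a b hab ha hb
      rw [hadj] at hab
      obtain ⟨hne, hcase⟩ := hab
      have h9a := (π a).isLt
      have h9b := (π b).isLt
      rcases hcase with ⟨⟨_, _, hsp⟩, _⟩ | ⟨_, hrot⟩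
      · omega
      · have hrot' := hrot.2
        omega
    have k1 := key p q hpq hp hq
    have k2 := key p r hpr hp hr
    have k3 := key q r hqr hq hr
    omega
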